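/- Let G₁ and G₂ be groups and let ρ₁: G₁ → SU(2) and ρ₂: G₂ → SU(2) be irreducible representations. Then the subspace of χ(G₁ * G₂) (the free product) consisting of classes [ρ] whose restriction to G₁ is conjugate to ρ₁ and whose restriction to G₂ is conjugate to ρ₂ is homeomorphic to the quotient group SU(2)/{I, −I} with its quotient topology (equivalently, to real projective 3-space). -/

import Mathlib

open Matrix

noncomputable section

/-- `SU(2)`: 2×2 special unitary complex matrices. -/
abbrev SU2 : Type := Matrix.specialUnitaryGroup (Fin 2) ℂ

namespace CS

noncomputable instance : Group SU2 :=
  { (inferInstance : Monoid SU2) with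
    inv := fun A => ⟨star (A : Matrix (Fin 2) (Fin 2) ℂ), by
      rcases Submonoid.mem_inf.mp A.2 with ⟨h1, h2⟩
      refine Submonoid.mem_inf.mpr ⟨Unitary.star_mem h1, ?_⟩
      have hdet : (star (A : Matrix (Fin 2) (Fin 2) ℂ)).det = star ((A : Matrix (Fin 2) (Fin 2) ℂ).det) := by
        simp [Matrix.star_eq_conjTranspose, Matrix.det_conjTranspose]
      have h2' : (A : Matrix (Fin 2) (Fin 2) ℂ).det = 1 := h2
      have : (star (A : Matrix (Fin 2) (Fin 2) ℂ)).det = 1 := by rw [hdet, h2', star_one]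
      simpa only [MonoidHom.mem_mker, ← Matrix.coe_detMonoidHom] using this⟩
    inv_mul_cancel := fun A => Subtype.ext (Submonoid.mem_inf.mp A.2).1.1 }

/-- The topology of pointwise convergence on the space of representations. -/
instance repTop (G : Type*) [Group G] : TopologicalSpace (G →* SU2) :=
  TopologicalSpace.induced (fun ρ => (ρ : G → SU2)) inferInstance

/-- Conjugation equivalence of representations. -/
def conjSetoid (G : Type*) [Group G] : Setoid (G →* SU2) where
  r ρ σ := ∃ u : SU2, ∀ g, σ g = u * ρ g * u⁻¹
  iseqv := by
    refine ⟨fun ρ => ⟨1, by simp⟩, ?_, ?_⟩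
    · rintro ρ σ ⟨u, h⟩
      exact ⟨u⁻¹, fun g => by rw [h g]; group⟩
    · rintro ρ σ τ ⟨u, h⟩ ⟨v, h'⟩
      exact ⟨v * u, fun g => by rw [h' g, h g]; group⟩

/-- The `SU(2)` character variety of a group `G`. -/
abbrev CharVar (G : Type*) [Group G] : Type _ := Quotient (conjSetoid G)

/-- The conjugacy class of a representation. -/
abbrev charCl {G : Type*} [Group G] (ρ : G →* SU2) : CharVar G :=
  Quotient.mk (conjSetoid G) ρ

/-- A representation is abelian if its image is abelian. -/
def IsAbelianRep {G : Type*} [Group G] (ρ : G →* SU2) : Prop :=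
  ∀ g h : G, Commute (ρ g) (ρ h)

/-- A representation is irreducible if its image is a non-abelian subgroup of `SU(2)`. -/
def IsIrrep {G : Type*} [Group G] (ρ : G →* SU2) : Prop :=
  ¬ IsAbelianRep ρ

/-- The irreducible part `χ*(G)` of the character variety. -/
abbrev CharVarIrr (G : Type*) [Group G] : Type _ :=
  {c : CharVar G // ∃ ρ : G →* SU2, IsIrrep ρ ∧ c = charCl ρ}

end CS
namespace CS

/-- `su(2)`: trace-zero skew-adjoint 2×2 complex matrices, as a real vector space. -/
def su2 : Submodule ℝ (Matrix (Fin 2) (Fin 2) ℂ) where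
  carrier := {A | Aᴴ = -A ∧ A.trace = 0}
  add_mem' := by
    rintro A B ⟨hA1, hA2⟩ ⟨hB1, hB2⟩
    refine ⟨?_, ?_⟩
    · rw [Matrix.conjTranspose_add, hA1, hB1, neg_add]
    · rw [Matrix.trace_add, hA2, hB2, add_zero]
  zero_mem' := by
    constructor <;> simp
  smul_mem' := by
    rintro c A ⟨hA1, hA2⟩
    refine ⟨?_, ?_⟩
    · rw [Matrix.conjTranspose_smul, hA1, smul_neg, star_trivial]
    · rw [Matrix.trace_smul, hA2, smul_zero]

variable {G : Type*} [Group G]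

/-- The adjoint action of a representation on 2×2 matrices: `g · v = ρ(g) v ρ(g)⁻¹`. -/
def adAct (ρ : G →* SU2) (g : G) (A : Matrix (Fin 2) (Fin 2) ℂ) : Matrix (Fin 2) (Fin 2) ℂ :=
  (ρ g : Matrix (Fin 2) (Fin 2) ℂ) * A * ((ρ g⁻¹ : SU2) : Matrix (Fin 2) (Fin 2) ℂ)

lemma adAct_add (ρ : G →* SU2) (g : G) (A B : Matrix (Fin 2) (Fin 2) ℂ) :
    adAct ρ g (A + B) = adAct ρ g A + adAct ρ g B := by
  simp [adAct, Matrix.add_mul, Matrix.mul_add]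

lemma adAct_smul (ρ : G →* SU2) (g : G) (c : ℝ) (A : Matrix (Fin 2) (Fin 2) ℂ) :
    adAct ρ g (c • A) = c • adAct ρ g A := by
  simp [adAct, Matrix.smul_mul, Matrix.mul_smul]

/-- The space of 1-cocycles of `G` with coefficients in `su(2)` twisted by `ad ρ`. -/
def oneCocyclesAd (ρ : G →* SU2) : Submodule ℝ (G → Matrix (Fin 2) (Fin 2) ℂ) where
  carrier := {f | (∀ g, f g ∈ su2) ∧ ∀ g h, f (g * h) = f g + adAct ρ g (f h)}
  add_mem' := by
    rintro f f' ⟨hf1, hf2⟩ ⟨hf'1, hf'2⟩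
    refine ⟨fun g => su2.add_mem (hf1 g) (hf'1 g), fun g h => ?_⟩
    simp only [Pi.add_apply, hf2 g h, hf'2 g h, adAct_add]
    abel
  zero_mem' := by
    refine ⟨fun g => su2.zero_mem, fun g h => ?_⟩
    simp [adAct]
  smul_mem' := by
    rintro c f ⟨hf1, hf2⟩
    refine ⟨fun g => su2.smul_mem c (hf1 g), fun g h => ?_⟩
    simp only [Pi.smul_apply, hf2 g h, adAct_smul, smul_add]

/-- The space of 1-coboundaries of `G` with coefficients in `su(2)` twisted by `ad ρ`. -/
def oneCoboundariesAd (ρ : G →* SU2) : Submodule ℝ (G → Matrix (Fin 2) (Fin 2) ℂ) where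
  carrier := {f | ∃ A ∈ su2, ∀ g, f g = adAct ρ g A - A}
  add_mem' := by
    rintro f f' ⟨A, hA, hf⟩ ⟨B, hB, hf'⟩
    refine ⟨A + B, su2.add_mem hA hB, fun g => ?_⟩
    simp only [Pi.add_apply, hf g, hf' g, adAct_add]
    abel
  zero_mem' := ⟨0, su2.zero_mem, fun g => by simp [adAct]⟩
  smul_mem' := by
    rintro c f ⟨A, hA, hf⟩
    refine ⟨c • A, su2.smul_mem c hA, fun g => ?_⟩
    simp only [Pi.smul_apply, hf g, adAct_smul, smul_sub]

/-- First group cohomology `H¹(G; su(2)_{ad ρ})`, as a real vector space. -/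
def H1Ad (ρ : G →* SU2) : Type _ :=
  ↥(oneCocyclesAd ρ) ⧸ ((oneCoboundariesAd ρ).comap (oneCocyclesAd ρ).subtype)

noncomputable instance (ρ : G →* SU2) : AddCommGroup (H1Ad ρ) :=
  inferInstanceAs (AddCommGroup (↥(oneCocyclesAd ρ) ⧸ ((oneCoboundariesAd ρ).comap (oneCocyclesAd ρ).subtype)))

noncomputable instance (ρ : G →* SU2) : Module ℝ (H1Ad ρ) :=
  inferInstanceAs (Module ℝ (↥(oneCocyclesAd ρ) ⧸ ((oneCoboundariesAd ρ).comap (oneCocyclesAd ρ).subtype)))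

/-- The dimension (rank) of `H¹(G; su(2)_{ad ρ})` over `ℝ`. -/
noncomputable def h1dim (ρ : G →* SU2) : Cardinal := Module.rank ℝ (H1Ad ρ)

end CS
namespace CS

/-- The relator set of the torus knot group `⟨x, y | xᵖ = y^q⟩`. -/
def tkRel (p q : ℤ) : Set (FreeGroup (Fin 2)) :=
  {FreeGroup.of 0 ^ p * FreeGroup.of 1 ^ (-q)}

/-- The `(p,q)` torus knot group `G_{p,q} = ⟨x, y | xᵖ y^{-q}⟩`. -/
abbrev TK (p q : ℤ) : Type := PresentedGroup (tkRel p q)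

/-- The generator `x` of `G_{p,q}`. -/
def tkx (p q : ℤ) : TK p q := PresentedGroup.of 0

/-- The generator `y` of `G_{p,q}`. -/
def tky (p q : ℤ) : TK p q := PresentedGroup.of 1

/-- The meridian `μ = xᵃ yᵇ` of `G_{p,q}`. -/
def tkMu (p q a b : ℤ) : TK p q := tkx p q ^ a * tky p q ^ b

/-- The longitude `λ = xᵖ μ^{-pq}` of `G_{p,q}`. -/
def tkLam (p q a b : ℤ) : TK p q := tkx p q ^ p * tkMu p q a b ^ (-(p * q))

lemma tk_rel_holds (p q : ℤ) : tkx p q ^ p = tky p q ^ q := by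
  have hmem : FreeGroup.of (0 : Fin 2) ^ p * FreeGroup.of (1 : Fin 2) ^ (-q) ∈
      Subgroup.normalClosure (tkRel p q) :=
    Subgroup.subset_normalClosure rfl
  have h1 : PresentedGroup.mk (tkRel p q) (FreeGroup.of 0 ^ p * FreeGroup.of 1 ^ (-q)) = 1 :=
    (QuotientGroup.eq_one_iff _).mpr hmem
  have h2 : tkx p q ^ p * tky p q ^ (-q) = 1 := by
    have := h1
    rw [_root_.map_mul, map_zpow, map_zpow] at this
    exact this
  rw [_root_.zpow_neg] at h2
  exact (mul_inv_eq_one.mp h2)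

lemma tk_xp_central (p q : ℤ) (w : TK p q) : Commute (tkx p q ^ p) w := by
  have hw : w ∈ Subgroup.closure (Set.range (PresentedGroup.of : Fin 2 → TK p q)) := by
    rw [PresentedGroup.closure_range_of]; trivial
  induction hw using Subgroup.closure_induction with
  | mem z hz =>
      obtain ⟨i, rfl⟩ := hz
      fin_cases i
      · exact (Commute.refl (tkx p q)).zpow_left p
      · rw [tk_rel_holds p q]
        exact (Commute.refl (tky p q)).zpow_left q
  | one => exact Commute.one_right _
  | mul a b _ _ ha hb => exact ha.mul_right hb
  | inv a _ ha => exact ha.inv_right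

lemma tk_mu_lam_comm (p q a b : ℤ) : Commute (tkMu p q a b) (tkLam p q a b) := by
  unfold tkLam
  exact (tk_xp_central p q (tkMu p q a b)).symm.mul_right
    ((Commute.refl (tkMu p q a b)).zpow_right (-(p * q)))

end CS
namespace CS

/-- The free abelian group of rank 2, written multiplicatively. -/
abbrev Z2 : Type := Multiplicative (ℤ × ℤ)

/-- The homomorphism `ℤ² → G` sending the generators to a pair of commuting elements. -/
def zsqHom {G : Type*} [Group G] (u v : G) (huv : Commute u v) : Z2 →* G where
  toFun z := u ^ (Multiplicative.toAdd z).1 * v ^ (Multiplicative.toAdd z).2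
  map_one' := by simp
  map_mul' z w := by
    have h := (huv.zpow_zpow (Multiplicative.toAdd w).1 (Multiplicative.toAdd z).2).eq
    simp only [toAdd_mul, Prod.fst_add, Prod.snd_add, _root_.zpow_add]
    calc u ^ (Multiplicative.toAdd z).1 * u ^ (Multiplicative.toAdd w).1 *
          (v ^ (Multiplicative.toAdd z).2 * v ^ (Multiplicative.toAdd w).2)
        = u ^ (Multiplicative.toAdd z).1 *
            (u ^ (Multiplicative.toAdd w).1 * v ^ (Multiplicative.toAdd z).2) *
            v ^ (Multiplicative.toAdd w).2 := by group
      _ = u ^ (Multiplicative.toAdd z).1 *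
            (v ^ (Multiplicative.toAdd z).2 * u ^ (Multiplicative.toAdd w).1) *
            v ^ (Multiplicative.toAdd w).2 := by rw [h]
      _ = u ^ (Multiplicative.toAdd z).1 * v ^ (Multiplicative.toAdd z).2 *
            (u ^ (Multiplicative.toAdd w).1 * v ^ (Multiplicative.toAdd w).2) := by group

section Amalg

variable {A G H : Type*} [Group A] [Group G] [Group H]

/-- The normal subgroup of the free product generated by the amalgamation relations. -/
def amalgRel (φ : A →* G) (ψ : A →* H) : Subgroup (Monoid.Coprod G H) :=
  Subgroup.normalClosure (Set.range fun a => Monoid.Coprod.inl (φ a) * (Monoid.Coprod.inr (ψ a))⁻¹)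

instance amalgRel_normal (φ : A →* G) (ψ : A →* H) : (amalgRel φ ψ).Normal :=
  Subgroup.normalClosure_normal

/-- The pushout (amalgamated free product) of `φ : A → G` and `ψ : A → H`. -/
abbrev Amalg (φ : A →* G) (ψ : A →* H) : Type _ :=
  Monoid.Coprod G H ⧸ amalgRel φ ψ

/-- The canonical map `G → G *_A H`. -/
def Amalg.inl (φ : A →* G) (ψ : A →* H) : G →* Amalg φ ψ :=
  (QuotientGroup.mk' (amalgRel φ ψ)).comp Monoid.Coprod.inl

/-- The canonical map `H → G *_A H`. -/
def Amalg.inr (φ : A →* G) (ψ : A →* H) : H →* Amalg φ ψ :=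
  (QuotientGroup.mk' (amalgRel φ ψ)).comp Monoid.Coprod.inr

lemma amalg_comm (φ : A →* G) (ψ : A →* H) (a : A) :
    Amalg.inl φ ψ (φ a) = Amalg.inr φ ψ (ψ a) := by
  have hgen : Monoid.Coprod.inl (φ a) * (Monoid.Coprod.inr (ψ a))⁻¹ ∈ amalgRel φ ψ :=
    Subgroup.subset_normalClosure ⟨a, rfl⟩
  have hinv : (Monoid.Coprod.inr (ψ a) : Monoid.Coprod G H) * (Monoid.Coprod.inl (φ a))⁻¹ ∈
      amalgRel φ ψ := by
    have := (amalgRel φ ψ).inv_mem hgen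
    simpa [_root_.mul_inv_rev] using this
  have hkey : ((Monoid.Coprod.inl (φ a) : Monoid.Coprod G H))⁻¹ * Monoid.Coprod.inr (ψ a) ∈
      amalgRel φ ψ := (amalgRel_normal φ ψ).mem_comm hinv
  exact (QuotientGroup.eq (s := amalgRel φ ψ)).mpr hkey

end Amalg

/-! Specific meridians and longitudes. -/

/-- Meridian of `T(3,5)`. -/
def mu35 : TK 3 5 := tkMu 3 5 2 (-3)
/-- Longitude of `T(3,5)`. -/
def lam35 : TK 3 5 := tkLam 3 5 2 (-3)
/-- Meridian of `T(2,7)`. -/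
def mu27 : TK 2 7 := tkMu 2 7 1 (-3)
/-- Longitude of `T(2,7)`. -/
def lam27 : TK 2 7 := tkLam 2 7 1 (-3)
/-- Meridian of `T(-2,7)`. -/
def muN27 : TK (-2) 7 := tkMu (-2) 7 1 3
/-- Longitude of `T(-2,7)`. -/
def lamN27 : TK (-2) 7 := tkLam (-2) 7 1 3

/-- `φ_X : ℤ² → G_{3,5}`, `(m,n) ↦ μ_X^m λ_X^n`. -/
def phiX : Z2 →* TK 3 5 := zsqHom mu35 lam35 (tk_mu_lam_comm 3 5 2 (-3))

lemma mu_mulLam_comm {Γ : Type*} [Group Γ] {μ ℓ : Γ} (h : Commute μ ℓ) :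
    Commute μ ((μ * ℓ)⁻¹) :=
  ((Commute.refl μ).mul_right h).inv_right

/-- `φ_Y : ℤ² → G_{2,7}`, `(m,n) ↦ μ_Y^m (μ_Y λ_Y)^{-n}`. -/
def phiY : Z2 →* TK 2 7 :=
  zsqHom mu27 ((mu27 * lam27)⁻¹) (mu_mulLam_comm (tk_mu_lam_comm 2 7 1 (-3)))

/-- `π₁(Σ₁)`, the pushout of `φ_X` and `φ_Y`. -/
abbrev Pi1Sigma1 : Type _ := Amalg phiX phiY

/-- `π₁(Z)`, the group of the complement of `T(-2,7) # T(-2,7)`: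
the pushout of the two meridian inclusions `ℤ → G_{-2,7}`. -/
abbrev Pi1Z : Type _ :=
  Amalg (zpowersHom (TK (-2) 7) muN27) (zpowersHom (TK (-2) 7) muN27)

/-- The meridian of `Z`. -/
def muZ : Pi1Z := Amalg.inl _ _ muN27

/-- The longitude of `Z`: the product of the images of the two longitudes. -/
def lamZ : Pi1Z := Amalg.inl _ _ lamN27 * Amalg.inr _ _ lamN27

lemma muZ_eq_inr : muZ = Amalg.inr (zpowersHom (TK (-2) 7) muN27) (zpowersHom (TK (-2) 7) muN27) muN27 := by
  have := amalg_comm (zpowersHom (TK (-2) 7) muN27) (zpowersHom (TK (-2) 7) muN27)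
    (Multiplicative.ofAdd 1)
  simpa [muZ] using this

lemma muZ_lamZ_comm : Commute muZ lamZ := by
  have h1 : Commute muZ (Amalg.inl (zpowersHom (TK (-2) 7) muN27) (zpowersHom (TK (-2) 7) muN27) lamN27) :=
    (tk_mu_lam_comm (-2) 7 1 3).map _
  have h2 : Commute muZ (Amalg.inr (zpowersHom (TK (-2) 7) muN27) (zpowersHom (TK (-2) 7) muN27) lamN27) := by
    rw [muZ_eq_inr]
    exact (tk_mu_lam_comm (-2) 7 1 3).map _
  exact h1.mul_right h2

/-- `ψ_X : ℤ² → G_{3,5}` (same formula as `φ_X`). -/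
def psiX : Z2 →* TK 3 5 := phiX

/-- `ψ_Z : ℤ² → π₁(Z)`, `(m,n) ↦ μ_Z^m (μ_Z λ_Z)^{-n}`. -/
def psiZ : Z2 →* Pi1Z := zsqHom muZ ((muZ * lamZ)⁻¹) (mu_mulLam_comm muZ_lamZ_comm)

/-- `π₁(Σ₂)`, the pushout of `ψ_X` and `ψ_Z`. -/
abbrev Pi1Sigma2 : Type _ := Amalg psiX psiZ

end CS
namespace CS

/-- The diagonal matrix `diag(e^{it}, e^{-it})`. -/
def diagU (t : ℝ) : Matrix (Fin 2) (Fin 2) ℂ :=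
  Matrix.diagonal ![Complex.exp ((t : ℂ) * Complex.I), Complex.exp (-(t : ℂ) * Complex.I)]

lemma star_exp_I (s : ℝ) :
    star (Complex.exp ((s : ℂ) * Complex.I)) = Complex.exp (-(s : ℂ) * Complex.I) :=
  calc star (Complex.exp ((s : ℂ) * Complex.I))
      = (starRingEnd ℂ) (Complex.exp ((s : ℂ) * Complex.I)) := rfl
    _ = Complex.exp ((starRingEnd ℂ) ((s : ℂ) * Complex.I)) := (Complex.exp_conj _).symm
    _ = Complex.exp (-(s : ℂ) * Complex.I) := by
        rw [_root_.map_mul, Complex.conj_I, Complex.conj_ofReal, mul_neg, ← neg_mul]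

lemma exp_I_mul_exp_neg_I (s : ℝ) :
    Complex.exp ((s : ℂ) * Complex.I) * Complex.exp (-(s : ℂ) * Complex.I) = 1 := by
  rw [← Complex.exp_add, show (s : ℂ) * Complex.I + -(s : ℂ) * Complex.I = 0 by ring,
    Complex.exp_zero]

lemma diagU_mul (s u : ℝ) : diagU s * diagU u = diagU (s + u) := by
  unfold diagU
  rw [Matrix.diagonal_mul_diagonal, Matrix.diagonal_eq_diagonal_iff]
  intro i
  fin_cases i
  · show Complex.exp _ * Complex.exp _ = Complex.exp _
    rw [← Complex.exp_add]; congr 1; push_cast; ring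
  · show Complex.exp _ * Complex.exp _ = Complex.exp _
    rw [← Complex.exp_add]; congr 1; push_cast; ring

lemma diagU_zero : diagU 0 = 1 := by
  unfold diagU
  rw [show (![Complex.exp (((0:ℝ) : ℂ) * Complex.I), Complex.exp (-((0:ℝ) : ℂ) * Complex.I)] :
      Fin 2 → ℂ) = fun _ => 1 by funext i; fin_cases i <;> simp]
  exact Matrix.diagonal_one

lemma star_diagU (t : ℝ) : star (diagU t) = diagU (-t) := by
  unfold diagU
  rw [Matrix.star_eq_conjTranspose, Matrix.diagonal_conjTranspose,
    Matrix.diagonal_eq_diagonal_iff]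
  intro i
  fin_cases i
  · show star (Complex.exp ((t : ℂ) * Complex.I)) = Complex.exp (((-t : ℝ) : ℂ) * Complex.I)
    rw [star_exp_I t]; push_cast; ring_nf
  · show star (Complex.exp (-(t : ℂ) * Complex.I)) = Complex.exp (-((-t : ℝ) : ℂ) * Complex.I)
    rw [show -(t : ℂ) * Complex.I = ((-t : ℝ) : ℂ) * Complex.I by push_cast; ring,
      star_exp_I (-t)]

lemma diagU_mem (t : ℝ) : diagU t ∈ Matrix.specialUnitaryGroup (Fin 2) ℂ := by
  refine Submonoid.mem_inf.mpr ⟨⟨?_, ?_⟩, ?_⟩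
  · rw [star_diagU, diagU_mul, neg_add_cancel, diagU_zero]
  · rw [star_diagU, diagU_mul, add_neg_cancel, diagU_zero]
  · have : (diagU t).det = 1 := by
      unfold diagU
      rw [Matrix.det_diagonal, Fin.prod_univ_two]
      simpa using exp_I_mul_exp_neg_I t
    simpa only [MonoidHom.mem_mker, ← Matrix.coe_detMonoidHom] using this

/-- The element `diag(e^{it}, e^{-it})` of `SU(2)`. -/
def diagSU (t : ℝ) : SU2 := ⟨diagU t, diagU_mem t⟩

lemma diagSU_comm (s t : ℝ) : Commute (diagSU s) (diagSU t) := by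
  apply Subtype.ext
  show diagU s * diagU t = diagU t * diagU s
  rw [diagU_mul, diagU_mul, add_comm]

end CS
namespace CS

/-- The setoid on `A × [0,1)` collapsing `A × {0}` to a point. -/
def coneSetoid (A : Type*) : Setoid (A × (Set.Ico (0:ℝ) 1)) where
  r p q := p = q ∨ (((p.2 : ℝ) = 0) ∧ ((q.2 : ℝ) = 0))
  iseqv := by
    constructor
    · intro p; exact Or.inl rfl
    · rintro p q (rfl | ⟨h1, h2⟩)
      · exact Or.inl rfl
      · exact Or.inr ⟨h2, h1⟩
    · rintro p q r (rfl | ⟨h1, h2⟩) h'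
      · exact h'
      · rcases h' with rfl | ⟨h3, h4⟩
        · exact Or.inr ⟨h1, h2⟩
        · exact Or.inr ⟨h1, h4⟩

/-- The open cone on a space `A`: `(A × [0,1)) / (A × {0})`. -/
abbrev OpenCone (A : Type*) [TopologicalSpace A] : Type _ := Quotient (coneSetoid A)

/-- The setoid on `X ⊕ Y` identifying the two base points `x₀` and `y₀`. -/
def wedgeSetoid (X Y : Type*) (x0 : X) (y0 : Y) : Setoid (X ⊕ Y) where
  r p q := p = q ∨ ((p = Sum.inl x0 ∨ p = Sum.inr y0) ∧ (q = Sum.inl x0 ∨ q = Sum.inr y0))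
  iseqv := by
    constructor
    · intro p; exact Or.inl rfl
    · rintro p q (rfl | ⟨h1, h2⟩)
      · exact Or.inl rfl
      · exact Or.inr ⟨h2, h1⟩
    · rintro p q r (rfl | ⟨h1, h2⟩) h'
      · exact h'
      · rcases h' with rfl | ⟨h3, h4⟩
        · exact Or.inr ⟨h1, h2⟩
        · exact Or.inr ⟨h1, h4⟩

/-- The one-point union (wedge) of `X` and `Y` at the base points `x₀`, `y₀`. -/
abbrev Wedge (X Y : Type*) [TopologicalSpace X] [TopologicalSpace Y] (x0 : X) (y0 : Y) :
    Type _ := Quotient (wedgeSetoid X Y x0 y0)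

/-- The 2-sphere. -/
abbrev Sphere2 : Type _ := Metric.sphere (0 : EuclideanSpace ℝ (Fin 3)) 1

/-- The 3-torus. -/
abbrev Torus3 : Type _ := Circle × Circle × Circle

end CS

namespace CS

lemma negOne_mem : (-1 : Matrix (Fin 2) (Fin 2) ℂ) ∈ Matrix.specialUnitaryGroup (Fin 2) ℂ := by
  refine Submonoid.mem_inf.mpr ⟨⟨?_, ?_⟩, ?_⟩
  · simp
  · simp
  · have : (-1 : Matrix (Fin 2) (Fin 2) ℂ).det = 1 := by
      rw [show (-1 : Matrix (Fin 2) (Fin 2) ℂ) = (-1 : ℂ) • (1 : Matrix (Fin 2) (Fin 2) ℂ) by simp]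
      rw [Matrix.det_smul, Matrix.det_one]
      norm_num
    simpa only [MonoidHom.mem_mker, ← Matrix.coe_detMonoidHom] using this

/-- The element `-I` of `SU(2)`. -/
def negOneSU : SU2 := ⟨-1, negOne_mem⟩

/-- The central subgroup `{I, -I}` of `SU(2)`. -/
def pmOne : Subgroup SU2 := Subgroup.zpowers negOneSU

lemma negOne_central (g : SU2) : Commute negOneSU g := by
  apply Subtype.ext
  show (-1 : Matrix (Fin 2) (Fin 2) ℂ) * (g : Matrix (Fin 2) (Fin 2) ℂ)
      = (g : Matrix (Fin 2) (Fin 2) ℂ) * (-1)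
  rw [neg_one_mul, mul_neg_one]

instance : pmOne.Normal := by
  constructor
  intro n hn g
  obtain ⟨k, rfl⟩ := Subgroup.mem_zpowers_iff.mp hn
  have hc : Commute (negOneSU ^ k) g := (negOne_central g).zpow_left k
  have : g * negOneSU ^ k * g⁻¹ = negOneSU ^ k := by
    rw [← hc.eq, mul_assoc, mul_inv_cancel, mul_one]
  rw [this]
  exact Subgroup.mem_zpowers_iff.mpr ⟨k, rfl⟩

end CS

namespace CS

open Complex

local notation "M2" => Matrix (Fin 2) (Fin 2) ℂ

/-! ### SU(2) structure lemmas -/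

lemma su2_star_eq_adjugate (A : SU2) : star (A : M2) = (A : M2).adjugate := by
  rcases Matrix.mem_specialUnitaryGroup_iff.mp A.2 with ⟨hu, hdet⟩
  have h2 : (A : M2) * (A : M2).adjugate = 1 := by
    rw [Matrix.mul_adjugate, hdet, one_smul]
  have h3 : star (A : M2) * (A : M2) = 1 := Matrix.mem_unitaryGroup_iff'.mp hu
  calc star (A : M2) = star (A : M2) * ((A : M2) * (A : M2).adjugate) := by rw [h2, mul_one]
    _ = (A : M2).adjugate := by rw [← mul_assoc, h3, one_mul]

lemma su2_entry10 (A : SU2) :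
    (A : M2) 1 0 = -(starRingEnd ℂ) ((A : M2) 0 1) := by
  have h := congrFun (congrFun (su2_star_eq_adjugate A) 0) 1
  rw [Matrix.star_apply, Matrix.adjugate_fin_two] at h
  simp at h
  have h2 := congrArg (starRingEnd ℂ) h
  simpa using h2

lemma su2_entry11 (A : SU2) :
    (A : M2) 1 1 = (starRingEnd ℂ) ((A : M2) 0 0) := by
  have h := congrFun (congrFun (su2_star_eq_adjugate A) 0) 0
  rw [Matrix.star_apply, Matrix.adjugate_fin_two] at h
  simp at h
  exact h.symm

lemma su2_det (A : SU2) :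
    (A : M2) 0 0 * (starRingEnd ℂ) ((A : M2) 0 0)
      + (A : M2) 0 1 * (starRingEnd ℂ) ((A : M2) 0 1) = 1 := by
  rcases Matrix.mem_specialUnitaryGroup_iff.mp A.2 with ⟨-, hdet⟩
  have h := Matrix.det_fin_two (A : M2)
  rw [hdet, su2_entry10, su2_entry11] at h
  linear_combination -h

lemma su2_coe_mul (A B : SU2) : ((A * B : SU2) : M2) = (A : M2) * (B : M2) := rfl

lemma su2_coe_inv (A : SU2) : ((A⁻¹ : SU2) : M2) = star (A : M2) := rfl

lemma su2_coe_one : ((1 : SU2) : M2) = 1 := rfl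

/-! ### The commuting criterion -/

lemma commute_entries {A B : SU2} :
    Commute A B ↔
      ((A : M2) 0 1 * (starRingEnd ℂ) ((B : M2) 0 1)
          = (B : M2) 0 1 * (starRingEnd ℂ) ((A : M2) 0 1)
        ∧ (B : M2) 0 1 * ((A : M2) 0 0 - (starRingEnd ℂ) ((A : M2) 0 0))
          = (A : M2) 0 1 * ((B : M2) 0 0 - (starRingEnd ℂ) ((B : M2) 0 0))) := by
  have hA10 := su2_entry10 A
  have hA11 := su2_entry11 A
  have hB10 := su2_entry10 B
  have hB11 := su2_entry11 B
  constructor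
  · intro h
    have hm : (A : M2) * (B : M2) = (B : M2) * (A : M2) := congrArg Subtype.val h
    have h00 := congrFun (congrFun hm 0) 0
    have h01 := congrFun (congrFun hm 0) 1
    simp only [Matrix.mul_apply, Fin.sum_univ_two, hA10, hA11, hB10, hB11] at h00 h01
    constructor
    · linear_combination -h00
    · linear_combination h01
  · rintro ⟨e1, e2⟩
    have e1' := congrArg (starRingEnd ℂ) e1
    have e2' := congrArg (starRingEnd ℂ) e2
    simp only [_root_.map_mul, _root_.map_sub, Complex.conj_conj] at e1' e2'
    refine Subtype.ext ?_
    show (A : M2) * (B : M2) = (B : M2) * (A : M2)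
    rw [← Matrix.ext_iff]
    simp only [Fin.forall_fin_two]
    simp only [Matrix.mul_apply, Fin.sum_univ_two, hA10, hA11, hB10, hB11]
    refine ⟨⟨?_, ?_⟩, ?_, ?_⟩
    · linear_combination -e1
    · linear_combination e2
    · linear_combination -e2'
    · linear_combination -e1'

/-! ### Schur's lemma for SU(2) -/

lemma key_complex {a b x y z w : ℂ} (h : b ≠ 0 ∨ a ≠ (starRingEnd ℂ) a)
    (hB1 : b * (starRingEnd ℂ) y = y * (starRingEnd ℂ) b)
    (hB2 : y * (a - (starRingEnd ℂ) a) = b * (x - (starRingEnd ℂ) x))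
    (hC1 : b * (starRingEnd ℂ) w = w * (starRingEnd ℂ) b)
    (hC2 : w * (a - (starRingEnd ℂ) a) = b * (z - (starRingEnd ℂ) z)) :
    y * (starRingEnd ℂ) w = w * (starRingEnd ℂ) y
      ∧ w * (x - (starRingEnd ℂ) x) = y * (z - (starRingEnd ℂ) z) := by
  by_cases hb : b = 0
  · have ha : a - (starRingEnd ℂ) a ≠ 0 := by
      rcases h with h | h
      · exact absurd hb h
      · exact sub_ne_zero.mpr h
    have hy : y = 0 := by
      have := hB2; rw [hb, zero_mul] at this
      exact (mul_eq_zero.mp this).resolve_right ha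
    have hw : w = 0 := by
      have := hC2; rw [hb, zero_mul] at this
      exact (mul_eq_zero.mp this).resolve_right ha
    simp [hy, hw]
  · constructor
    · apply mul_left_cancel₀ hb
      linear_combination y * hC1 - w * hB1
    · apply mul_left_cancel₀ hb
      linear_combination y * hC2 - w * hB2

lemma schur_su2 {A B C : SU2} (hB : Commute A B) (hC : Commute A C)
    (hBC : ¬ Commute B C) : A = 1 ∨ A = negOneSU := by
  by_contra hA
  push_neg at hA
  have h : (A : M2) 0 1 ≠ 0 ∨ (A : M2) 0 0 ≠ (starRingEnd ℂ) ((A : M2) 0 0) := by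
    by_contra h'
    push_neg at h'
    obtain ⟨hb0, ha⟩ := h'
    have hdet := su2_det A
    rw [hb0, ← ha] at hdet
    simp only [zero_mul, mul_zero, add_zero, map_zero] at hdet
    have h1 : (A : M2) 0 0 = 1 ∨ (A : M2) 0 0 = -1 := mul_self_eq_one_iff.mp hdet
    have hA10 := su2_entry10 A
    have hA11 := su2_entry11 A
    rcases h1 with h1 | h1
    · apply hA.1
      refine Subtype.ext ?_
      show (A : M2) = 1
      rw [← Matrix.ext_iff]
      simp only [Fin.forall_fin_two]
      refine ⟨⟨?_, ?_⟩, ?_, ?_⟩ <;>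
        simp [Matrix.one_apply, hA10, hA11, hb0, h1]
    · apply hA.2
      refine Subtype.ext ?_
      show (A : M2) = -1
      rw [← Matrix.ext_iff]
      simp only [Fin.forall_fin_two]
      refine ⟨⟨?_, ?_⟩, ?_, ?_⟩ <;>
        simp [Matrix.one_apply, Matrix.neg_apply, hA10, hA11, hb0, h1]
  obtain ⟨eB1, eB2⟩ := commute_entries.mp hB
  obtain ⟨eC1, eC2⟩ := commute_entries.mp hC
  exact hBC (commute_entries.mpr (key_complex h eB1 eB2 eC1 eC2))

lemma centralizer_irrep {G : Type*} [Group G] {ρ : G →* SU2} (h : IsIrrep ρ)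
    {w : SU2} (hw : ∀ g, Commute w (ρ g)) : w = 1 ∨ w = negOneSU := by
  rw [IsIrrep, IsAbelianRep] at h
  push_neg at h
  obtain ⟨g, g', hgg'⟩ := h
  exact schur_su2 (hw g) (hw g') hgg'

lemma central_of_schur {w : SU2} (hw : w = 1 ∨ w = negOneSU) (x : SU2) :
    w * x = x * w := by
  rcases hw with rfl | rfl
  · rw [one_mul, mul_one]
  · exact (negOne_central x).eq

end CS

namespace CS

local notation "M2" => Matrix (Fin 2) (Fin 2) ℂ

/-! ### Topological facts about SU(2) -/

instance : CompactSpace SU2 := by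
  have hKc : IsCompact {A : M2 | ∀ i j, A i j ∈ Metric.closedBall (0 : ℂ) 1} := by
    have h : IsCompact (Set.univ.pi fun _ : Fin 2 =>
        (Set.univ.pi fun _ : Fin 2 => Metric.closedBall (0 : ℂ) 1 : Set (Fin 2 → ℂ)) :
          Set (Fin 2 → Fin 2 → ℂ)) :=
      isCompact_univ_pi fun _ => isCompact_univ_pi fun _ => isCompact_closedBall (0 : ℂ) 1
    have h2 : IsCompact ((Matrix.of : (Fin 2 → Fin 2 → ℂ) ≃ M2) ''
        (Set.univ.pi fun _ : Fin 2 =>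
          (Set.univ.pi fun _ : Fin 2 => Metric.closedBall (0 : ℂ) 1 : Set (Fin 2 → ℂ)))) :=
      h.image (continuous_id : Continuous (Matrix.of : (Fin 2 → Fin 2 → ℂ) → M2))
    have heq : {A : M2 | ∀ i j, A i j ∈ Metric.closedBall (0 : ℂ) 1} =
        (Matrix.of : (Fin 2 → Fin 2 → ℂ) ≃ M2) ''
          (Set.univ.pi fun _ : Fin 2 =>
            (Set.univ.pi fun _ : Fin 2 => Metric.closedBall (0 : ℂ) 1 : Set (Fin 2 → ℂ))) := by
      ext A
      constructor
      · intro hA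
        refine ⟨A, ?_, rfl⟩
        exact fun i _ j _ => hA i j
      · rintro ⟨f, hf, rfl⟩
        simp only [Set.mem_univ_pi] at hf
        exact fun i j => hf i j
    rw [heq]
    exact h2
  have hcl : IsClosed ((Matrix.specialUnitaryGroup (Fin 2) ℂ : Submonoid M2) : Set M2) := by
    have heq : ((Matrix.specialUnitaryGroup (Fin 2) ℂ : Submonoid M2) : Set M2) =
        {A : M2 | A * star A = 1} ∩ {A : M2 | A.det = 1} := by
      ext A
      simp only [SetLike.mem_coe, Matrix.mem_specialUnitaryGroup_iff,
        Matrix.mem_unitaryGroup_iff, Set.mem_inter_iff, Set.mem_setOf_eq]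
    rw [heq]
    exact (isClosed_eq (continuous_id.mul continuous_star) continuous_const).inter
      (isClosed_eq continuous_id.matrix_det continuous_const)
  have hsub : ((Matrix.specialUnitaryGroup (Fin 2) ℂ : Submonoid M2) : Set M2) ⊆
      {A : M2 | ∀ i j, A i j ∈ Metric.closedBall (0 : ℂ) 1} := by
    intro A hA i j
    have hu : A * star A = 1 :=
      Matrix.mem_unitaryGroup_iff.mp (Matrix.mem_specialUnitaryGroup_iff.mp hA).1
    have h := congrFun (congrFun hu i) i
    simp only [Matrix.mul_apply, Fin.sum_univ_two, Matrix.star_apply, Matrix.one_apply_eq,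
      RCLike.star_def, Complex.mul_conj] at h
    have h' : Complex.normSq (A i 0) + Complex.normSq (A i 1) = 1 := by
      have := congrArg Complex.re h
      simpa using this
    rw [Metric.mem_closedBall, dist_zero_right]
    have hn0 : ‖A i 0‖ ^ 2 = Complex.normSq (A i 0) := by
      exact Complex.sq_norm _
    have hn1 : ‖A i 1‖ ^ 2 = Complex.normSq (A i 1) := by
      exact Complex.sq_norm _
    have hj : j = 0 ∨ j = 1 := by
      rcases Fin.exists_fin_two.mp ⟨j, rfl⟩ with h'' | h''
      · exact Or.inl h''
      · exact Or.inr h''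
    rcases hj with rfl | rfl <;>
      nlinarith [hn0, hn1,
        Complex.normSq_nonneg (A i 0), Complex.normSq_nonneg (A i 1),
        norm_nonneg (A i 0), norm_nonneg (A i 1)]
  exact isCompact_iff_compactSpace.mp (hKc.of_isClosed_subset hcl hsub)

lemma continuous_su2_inv : Continuous fun u : SU2 => u⁻¹ := by
  apply continuous_induced_rng.2
  exact continuous_star.comp continuous_subtype_val

instance (G : Type*) [Group G] : T2Space (G →* SU2) := by
  have h : Topology.IsEmbedding (fun ρ : G →* SU2 => (ρ : G → SU2)) :=
    ⟨⟨rfl⟩, fun a b hab => DFunLike.coe_injective hab⟩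
  exact h.t2Space

section Main

variable {G₁ G₂ : Type} [Group G₁] [Group G₂] (ρ1 : G₁ →* SU2) (ρ2 : G₂ →* SU2)

/-- The representation of the free product equal to `ρ1` on `G₁` and to `u ρ2 u⁻¹` on `G₂`. -/
def Frep (u : SU2) : Monoid.Coprod G₁ G₂ →* SU2 :=
  Monoid.Coprod.lift ρ1 ((MulAut.conj u).toMonoidHom.comp ρ2)

@[simp] lemma Frep_inl (u : SU2) (g : G₁) :
    Frep ρ1 ρ2 u (Monoid.Coprod.inl g) = ρ1 g :=
  Monoid.Coprod.lift_apply_inl _ _ _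

@[simp] lemma Frep_inr (u : SU2) (g : G₂) :
    Frep ρ1 ρ2 u (Monoid.Coprod.inr g) = u * ρ2 g * u⁻¹ := by
  rw [Frep, Monoid.Coprod.lift_apply_inr]
  simp [MulAut.conj_apply]

/-- A conjugated copy of `Frep`. -/
def Fconj (p : SU2 × SU2) : Monoid.Coprod G₁ G₂ →* SU2 :=
  (MulAut.conj p.1).toMonoidHom.comp (Frep ρ1 ρ2 p.2)

@[simp] lemma Fconj_apply (p : SU2 × SU2) (m : Monoid.Coprod G₁ G₂) :
    Fconj ρ1 ρ2 p m = p.1 * Frep ρ1 ρ2 p.2 m * p.1⁻¹ := by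
  rw [Fconj]
  simp [MulAut.conj_apply]

lemma Fconj_one (u : SU2) : Fconj ρ1 ρ2 (1, u) = Frep ρ1 ρ2 u :=
  MonoidHom.ext fun m => by simp

lemma continuous_Fconj : Continuous (Fconj ρ1 ρ2) := by
  apply continuous_induced_rng.2
  apply continuous_pi
  intro m
  show Continuous fun p : SU2 × SU2 => Fconj ρ1 ρ2 p m
  induction m using Monoid.Coprod.induction_on with
  | inl g =>
      simp only [Fconj_apply, Frep_inl]
      exact (continuous_fst.mul continuous_const).mul
        (continuous_su2_inv.comp continuous_fst)
  | inr g =>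
      simp only [Fconj_apply, Frep_inr]
      refine (continuous_fst.mul ?_).mul (continuous_su2_inv.comp continuous_fst)
      exact (continuous_snd.mul continuous_const).mul
        (continuous_su2_inv.comp continuous_snd)
  | mul x y hx hy =>
      simp only [_root_.map_mul]
      exact hx.mul hy

lemma continuous_Frep : Continuous (Frep ρ1 ρ2) := by
  have h : Frep ρ1 ρ2 = fun u => Fconj ρ1 ρ2 (1, u) := funext fun u => (Fconj_one ρ1 ρ2 u).symm
  rw [h]
  exact (continuous_Fconj ρ1 ρ2).comp (continuous_const.prodMk continuous_id)

end Main

end CS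

open CS in
/-- For irreducible `ρ₁ : G₁ → SU(2)` and `ρ₂ : G₂ → SU(2)`, the set of classes
in `χ(G₁ * G₂)` restricting (up to conjugation) to `ρ₁` and `ρ₂` is homeomorphic to
`SU(2)/{I,-I}` with its quotient topology. -/
theorem gluing_parameters_free_product (G₁ G₂ : Type) [Group G₁] [Group G₂]
    (ρ1 : G₁ →* SU2) (ρ2 : G₂ →* SU2) (h1 : IsIrrep ρ1) (h2 : IsIrrep ρ2) :
    Nonempty
      (↥{c : CharVar (Monoid.Coprod G₁ G₂) | ∃ ρ : Monoid.Coprod G₁ G₂ →* SU2, c = charCl ρ ∧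
          (∃ u : SU2, ∀ g : G₁, ρ (Monoid.Coprod.inl g) = u * ρ1 g * u⁻¹) ∧
          (∃ u : SU2, ∀ g : G₂, ρ (Monoid.Coprod.inr g) = u * ρ2 g * u⁻¹)}
        ≃ₜ (SU2 ⧸ pmOne)) := by
  classical
  set Sset : Set (CharVar (Monoid.Coprod G₁ G₂)) :=
    {c | ∃ ρ : Monoid.Coprod G₁ G₂ →* SU2, c = charCl ρ ∧
        (∃ u : SU2, ∀ g : G₁, ρ (Monoid.Coprod.inl g) = u * ρ1 g * u⁻¹) ∧
        (∃ u : SU2, ∀ g : G₂, ρ (Monoid.Coprod.inr g) = u * ρ2 g * u⁻¹)} with hSset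
  have hmem : ∀ u : SU2, charCl (Frep ρ1 ρ2 u) ∈ Sset := fun u =>
    ⟨Frep ρ1 ρ2 u, rfl, ⟨1, fun g => by simp⟩, ⟨u, fun g => by simp⟩⟩
  let f0 : SU2 → ↥Sset := fun u => ⟨charCl (Frep ρ1 ρ2 u), hmem u⟩
  -- well-definedness on the quotient
  have hwd : ∀ u v : SU2, (QuotientGroup.leftRel pmOne).r u v → f0 u = f0 v := by
    intro u v huv
    rw [QuotientGroup.leftRel_apply] at huv
    obtain ⟨k, hk⟩ := Subgroup.mem_zpowers_iff.mp huv
    have hz : ∀ x : SU2, (u⁻¹ * v) * x = x * (u⁻¹ * v) := by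
      intro x
      rw [← hk]
      exact ((negOne_central x).zpow_left k).eq
    have hzc : ∀ x : SU2, (u⁻¹ * v) * x * (u⁻¹ * v)⁻¹ = x := by
      intro x
      rw [hz x, mul_assoc, mul_inv_cancel, mul_one]
    have hFeq : Frep ρ1 ρ2 u = Frep ρ1 ρ2 v := by
      apply Monoid.Coprod.hom_ext
      · refine MonoidHom.ext fun g => ?_
        simp
      · refine MonoidHom.ext fun g => ?_
        simp only [MonoidHom.comp_apply, Frep_inr]
        have h' : v * ρ2 g * v⁻¹ = u * ((u⁻¹ * v) * ρ2 g * (u⁻¹ * v)⁻¹) * u⁻¹ := by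
          group
        rw [h', hzc]
    exact Subtype.ext (by show charCl (Frep ρ1 ρ2 u) = charCl (Frep ρ1 ρ2 v); rw [hFeq])
  have hf0c : Continuous f0 :=
    Continuous.subtype_mk (Continuous.comp continuous_quot_mk (continuous_Frep ρ1 ρ2)) _
  have hec : Continuous (Quotient.lift f0 hwd : SU2 ⧸ pmOne → ↥Sset) :=
    hf0c.quotient_lift hwd
  -- surjectivity
  have hsurj : Function.Surjective (Quotient.lift f0 hwd : SU2 ⧸ pmOne → ↥Sset) := by
    rintro ⟨c, ρ, rfl, ⟨u', hu⟩, ⟨v', hv⟩⟩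
    refine ⟨QuotientGroup.mk (u'⁻¹ * v'), ?_⟩
    show f0 (u'⁻¹ * v') = _
    apply Subtype.ext
    show charCl (Frep ρ1 ρ2 (u'⁻¹ * v')) = charCl ρ
    have hρ : ρ = Fconj ρ1 ρ2 (u', u'⁻¹ * v') := by
      apply Monoid.Coprod.hom_ext
      · refine MonoidHom.ext fun g => ?_
        simp only [MonoidHom.comp_apply, Fconj_apply, Frep_inl]
        exact hu g
      · refine MonoidHom.ext fun g => ?_
        simp only [MonoidHom.comp_apply, Fconj_apply, Frep_inr, hv g]
        group
    apply Quotient.sound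
    refine ⟨u', fun m => ?_⟩
    rw [hρ]
    simp only [Fconj_apply]
  -- injectivity
  have hinj : Function.Injective (Quotient.lift f0 hwd : SU2 ⧸ pmOne → ↥Sset) := by
    intro c d
    refine QuotientGroup.induction_on c fun u => QuotientGroup.induction_on d fun v h => ?_
    have hval : charCl (Frep ρ1 ρ2 u) = charCl (Frep ρ1 ρ2 v) := congrArg Subtype.val h
    obtain ⟨w, hw⟩ := Quotient.exact hval
    have hwcomm : ∀ g : G₁, Commute w (ρ1 g) := by
      intro g
      have hthis := hw (Monoid.Coprod.inl g)
      simp only [Frep_inl] at hthis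
      exact mul_inv_eq_iff_eq_mul.mp hthis.symm
    have hwc := central_of_schur (centralizer_irrep h1 hwcomm)
    have hconj : ∀ g : G₂, v * ρ2 g * v⁻¹ = u * ρ2 g * u⁻¹ := by
      intro g
      have hthis := hw (Monoid.Coprod.inr g)
      simp only [Frep_inr] at hthis
      rw [hthis, hwc (u * ρ2 g * u⁻¹), mul_assoc, mul_inv_cancel, mul_one]
    have hcomm2 : ∀ g : G₂, Commute (u⁻¹ * v) (ρ2 g) := by
      intro g
      show (u⁻¹ * v) * ρ2 g = ρ2 g * (u⁻¹ * v)
      calc (u⁻¹ * v) * ρ2 g = u⁻¹ * (v * ρ2 g * v⁻¹) * v := by group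
        _ = u⁻¹ * (u * ρ2 g * u⁻¹) * v := by rw [hconj g]
        _ = ρ2 g * (u⁻¹ * v) := by group
    rw [QuotientGroup.eq]
    rcases centralizer_irrep h2 hcomm2 with h' | h'
    · rw [h']
      exact pmOne.one_mem
    · rw [h']
      exact Subgroup.mem_zpowers _
  -- the map is closed
  have hclosedmap : ∀ Cs : Set (SU2 ⧸ pmOne), IsClosed Cs →
      IsClosed ((Quotient.lift f0 hwd : SU2 ⧸ pmOne → ↥Sset) '' Cs) := by
    intro Cs hCs
    have hpre : IsClosed ((QuotientGroup.mk : SU2 → SU2 ⧸ pmOne) ⁻¹' Cs) :=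
      hCs.preimage continuous_quot_mk
    have hcpt : IsCompact ((QuotientGroup.mk : SU2 → SU2 ⧸ pmOne) ⁻¹' Cs) :=
      hpre.isCompact
    set K : Set (Monoid.Coprod G₁ G₂ →* SU2) :=
      Fconj ρ1 ρ2 '' (Set.univ ×ˢ ((QuotientGroup.mk : SU2 → SU2 ⧸ pmOne) ⁻¹' Cs)) with hK
    have hKcpt : IsCompact K := (isCompact_univ.prod hcpt).image (continuous_Fconj ρ1 ρ2)
    have hKcl : IsClosed K := hKcpt.isClosed
    have hq : Topology.IsQuotientMap (Quotient.mk (conjSetoid (Monoid.Coprod G₁ G₂))) :=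
      isQuotientMap_quot_mk
    have hsat : (Quotient.mk (conjSetoid (Monoid.Coprod G₁ G₂))) ⁻¹'
        (Quotient.mk (conjSetoid (Monoid.Coprod G₁ G₂)) '' K) = K := by
      apply Set.Subset.antisymm
      · rintro ρ hρ
        obtain ⟨σ, hσK, hmk⟩ := hρ
        obtain ⟨z, hz⟩ := Quotient.exact hmk
        obtain ⟨⟨w, u⟩, ⟨-, huC⟩, rfl⟩ := hσK
        have hρeq : ρ = Fconj ρ1 ρ2 (z * w, u) := by
          apply MonoidHom.ext
          intro m
          rw [hz m]
          simp only [Fconj_apply]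
          group
        rw [hρeq]
        exact ⟨(z * w, u), ⟨Set.mem_univ _, huC⟩, rfl⟩
      · exact Set.subset_preimage_image _ _
    have hKimgcl : IsClosed (Quotient.mk (conjSetoid (Monoid.Coprod G₁ G₂)) '' K) := by
      rw [← hq.isClosed_preimage, hsat]
      exact hKcl
    have himg : (Quotient.lift f0 hwd : SU2 ⧸ pmOne → ↥Sset) '' Cs =
        Subtype.val ⁻¹' (Quotient.mk (conjSetoid (Monoid.Coprod G₁ G₂)) '' K) := by
      ext s
      constructor
      · rintro ⟨c, hcC, rfl⟩
        revert hcC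
        refine QuotientGroup.induction_on c fun u hu => ?_
        show charCl (Frep ρ1 ρ2 u) ∈ Quotient.mk (conjSetoid (Monoid.Coprod G₁ G₂)) '' K
        refine ⟨Fconj ρ1 ρ2 (1, u), ⟨(1, u), ⟨Set.mem_univ _, hu⟩, rfl⟩, ?_⟩
        rw [Fconj_one]
      · rintro hs
        obtain ⟨σ, hσK, hmk⟩ := hs
        obtain ⟨⟨w, u⟩, ⟨-, huC⟩, rfl⟩ := hσK
        refine ⟨QuotientGroup.mk u, huC, ?_⟩
        apply Subtype.ext
        show charCl (Frep ρ1 ρ2 u) = (s : CharVar (Monoid.Coprod G₁ G₂))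
        rw [← hmk]
        apply Quotient.sound
        exact ⟨w, fun m => by simp only [Fconj_apply]⟩
    rw [himg]
    exact hKimgcl.preimage continuous_subtype_val
  let E : (SU2 ⧸ pmOne) ≃ ↥Sset :=
    Equiv.ofBijective (Quotient.lift f0 hwd : SU2 ⧸ pmOne → ↥Sset) ⟨hinj, hsurj⟩
  have hinvc : Continuous E.symm := by
    rw [continuous_iff_isClosed]
    intro Cs hCs
    have himg2 : E.symm ⁻¹' Cs = E '' Cs := (E.image_eq_preimage_symm Cs).symm
    rw [himg2]
    exact hclosedmap Cs hCs
  exact ⟨(Homeomorph.mk E hec hinvc).symm⟩
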